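/- Let 𝔈 be a right inner product 𝔅-module admitting a finite module frame {v₁,…,vₙ}, i.e., Id = ∑ₖ Θ^R_{vₖ,vₖ} where Θ^R_{e₁,e₂}(e) = e₁·(e₂|e)_𝔅. Then the matrix p = ((vᵢ|vⱼ)_𝔅) ∈ Mₙ(𝔅) is an idempotent satisfying p* = p, and the maps S(e) = ((vⱼ|e)_𝔅)ⱼ and R((bⱼ)ⱼ) = ∑ⱼ vⱼ·bⱼ restrict to mutually inverse module isomorphisms between 𝔈 and p𝔅ⁿ. -/

import Mathlib

/-- if a right inner product 𝔅-module 𝔈 admits a finite module frame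
{v₁,…,vₙ}, then p = ((vᵢ|vⱼ)) ∈ Mₙ(𝔅) is a self-adjoint idempotent, and the maps
S(e) = ((vⱼ|e))ⱼ and R((bⱼ)) = ∑ⱼ vⱼ·bⱼ restrict to mutually inverse module
isomorphisms between 𝔈 and p𝔅ⁿ. -/
theorem stmt12 {B E : Type*} [Ring B] [StarRing B] [AddCommGroup E]
    (smul : E → B → E) (inn : E → E → B)
    -- right module and inner product axioms
    (hsmul_add : ∀ e b b', smul e (b + b') = smul e b + smul e b')
    (hadd_smul : ∀ e e' b, smul (e + e') b = smul e b + smul e' b)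
    (hsmul_mul : ∀ e b b', smul (smul e b) b' = smul e (b * b'))
    (hinn_star : ∀ e₁ e₂, star (inn e₁ e₂) = inn e₂ e₁)
    (hinn_lin : ∀ e₁ e₂ b, inn e₁ (smul e₂ b) = inn e₁ e₂ * b)
    (hinn_add : ∀ e₁ e₂ e₃, inn e₁ (e₂ + e₃) = inn e₁ e₂ + inn e₁ e₃)
    (hinn_def : ∀ e, inn e e = 0 → e = 0)
    {n : ℕ} (v : Fin n → E)
    -- finite module frame: Id = ∑ₖ Θ^R_{vₖ,vₖ}
    (hframe : ∀ e : E, e = ∑ k, smul (v k) (inn (v k) e)) :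
    letI p : Matrix (Fin n) (Fin n) B := Matrix.of fun i j => inn (v i) (v j)
    -- p is a self-adjoint idempotent
    p * p = p ∧ Matrix.conjTranspose p = p ∧
    -- R ∘ S = Id on 𝔈
    (∀ e : E, (∑ j, smul (v j) (inn (v j) e)) = e) ∧
    -- S maps 𝔈 into p𝔅ⁿ
    (∀ (e : E) (i : Fin n), inn (v i) e = ∑ j, p i j * inn (v j) e) ∧
    -- S ∘ R = Id on p𝔅ⁿ
    (∀ b : Fin n → B, (∀ i, b i = ∑ j, p i j * b j) →
      ∀ i, inn (v i) (∑ j, smul (v j) (b j)) = b i) ∧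
    -- S and R are right module maps
    (∀ (e : E) (c : B) (i : Fin n), inn (v i) (smul e c) = inn (v i) e * c) ∧
    (∀ (b : Fin n → B) (c : B),
      smul (∑ j, smul (v j) (b j)) c = ∑ j, smul (v j) (b j * c)) := by
  set p : Matrix (Fin n) (Fin n) B := Matrix.of fun i j => inn (v i) (v j) with hp
  -- inn e 0 = 0
  have hinn_zero : ∀ e : E, inn e 0 = 0 := by
    intro e
    have h := hinn_add e 0 0
    rw [add_zero] at h
    exact (left_eq_add.mp h)
  have hinn_sum : ∀ (e : E) (s : Finset (Fin n)) (f : Fin n → E),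
      inn e (∑ k ∈ s, f k) = ∑ k ∈ s, inn e (f k) := by
    intro e s f
    induction s using Finset.induction with
    | empty => simp [hinn_zero]
    | @insert a s h ih => rw [Finset.sum_insert h, Finset.sum_insert h, hinn_add, ih]
  have hsmul_zero : ∀ c : B, smul 0 c = 0 := by
    intro c
    have h := hadd_smul 0 0 c
    rw [add_zero] at h
    exact (left_eq_add.mp h)
  have hsum_smul : ∀ (s : Finset (Fin n)) (f : Fin n → E) (c : B),
      smul (∑ k ∈ s, f k) c = ∑ k ∈ s, smul (f k) c := by
    intro s f c
    induction s using Finset.induction with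
    | empty => simp [hsmul_zero]
    | @insert a s h ih => rw [Finset.sum_insert h, Finset.sum_insert h, hadd_smul, ih]
  -- key: ∑_j inn (v i) (v j) * b j = inn (v i) (∑_j smul (v j) (b j))
  have key : ∀ (i : Fin n) (b : Fin n → B),
      (∑ j, inn (v i) (v j) * b j) = inn (v i) (∑ j, smul (v j) (b j)) := by
    intro i b
    rw [hinn_sum]
    exact Finset.sum_congr rfl fun j _ => (hinn_lin _ _ _).symm
  refine ⟨?_, ?_, ?_, ?_, ?_, ?_, ?_⟩
  · ext i j
    simp only [Matrix.mul_apply, p, Matrix.of_apply]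
    rw [key i (fun k => inn (v k) (v j)), ← hframe (v j)]
  · ext i j
    simp [p, Matrix.conjTranspose_apply, hinn_star]
  · intro e; exact (hframe e).symm
  · intro e i
    simp only [p, Matrix.of_apply]
    rw [key i (fun j => inn (v j) e), ← hframe e]
  · intro b hb i
    rw [← key i b]
    exact (hb i).symm
  · intro e c i; exact hinn_lin _ _ _
  · intro b c
    rw [hsum_smul]
    exact Finset.sum_congr rfl fun j _ => hsmul_mul _ _ _
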